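/- Let T be a binary tree of size n and define the mirror Tamari polynomial B̃_T ∈ ℤ[x] by B̃_∅ = 1 and, for T = x(L,R), (x−1)·B̃_T(x) = x·B̃_R(x)·(x·B̃_L(x) − B̃_L(1)). Then for every k ≥ 0 the coefficient of x^k in B̃_T equals the number of binary trees T' of size n with T ≤ T' in the Tamari order whose right border has exactly k nodes; in particular B̃_T(1) is the number of trees greater than or equal to T. -/

import Mathlib

open Polynomial

/-- A binary tree: either the empty tree or a pair of binary trees
(left and right subtrees) grafted on an internal node. -/
inductive BinTree : Type
  | leaf : BinTree
  | node : BinTree → BinTree → BinTree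

namespace BinTree

/-- The size of a binary tree: its number of internal nodes. -/
def size : BinTree → ℕ
  | leaf => 0
  | node l r => l.size + r.size + 1

/-- One right rotation somewhere in the tree: `Rot T T'` means that `T'` is obtained
from `T` by replacing one subtree of the form `y(x(A,B),C)` by `x(A,y(B,C))`. -/
inductive Rot : BinTree → BinTree → Prop
  | root (A B C : BinTree) : Rot (node (node A B) C) (node A (node B C))
  | left {L L' : BinTree} (R : BinTree) : Rot L L' → Rot (node L R) (node L' R)
  | right (L : BinTree) {R R' : BinTree} : Rot R R' → Rot (node L R) (node L R')

/-- The Tamari order: `TamariLE T T'` iff `T'` is obtained from `T` by a (possibly empty)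
sequence of right rotations. -/
def TamariLE (T T' : BinTree) : Prop := Relation.ReflTransGen Rot T T'

/-- The Tamari polynomial `B_T ∈ ℤ[x]`: `B_∅ = 1` and for `T = x(L,R)`, `B_T` is the
unique polynomial with `(x-1)·B_T = x·B_L·(x·B_R - B_R(1))` (exact division by the
monic polynomial `X - 1`, the right-hand side vanishing at `x = 1`). -/
noncomputable def tamPoly : BinTree → Polynomial ℤ
  | leaf => 1
  | node l r =>
      (X * tamPoly l * (X * tamPoly r - C ((tamPoly r).eval 1))) /ₘ (X - C 1)

/-- The mirror Tamari polynomial, obtained by exchanging the roles of the left and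
right subtrees in the recursive definition of the Tamari polynomial. -/
noncomputable def tamPolyMirror : BinTree → Polynomial ℤ
  | leaf => 1
  | node l r =>
      (X * tamPolyMirror r * (X * tamPolyMirror l - C ((tamPolyMirror l).eval 1))) /ₘ (X - C 1)

/-- The number of nodes on the left border of a binary tree. -/
def leftBorder : BinTree → ℕ
  | leaf => 0
  | node l _ => l.leftBorder + 1

/-- The number of nodes on the right border of a binary tree. -/
def rightBorder : BinTree → ℕ
  | leaf => 0
  | node _ r => r.rightBorder + 1

/-- `inSub T a b`: in the unique binary-search-tree labelling of `T` by `1,…,size T`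
(all labels of the left subtree of a node are smaller than its label, all labels of its
right subtree are larger), the node labelled `a` belongs to the subtree rooted at the
node labelled `b` (in particular `inSub T a a` holds for every node label `a`). -/
def inSub : BinTree → ℕ → ℕ → Prop
  | leaf => fun _ _ => False
  | node l r => fun a b =>
      (b = l.size + 1 ∧ 1 ≤ a ∧ a ≤ l.size + r.size + 1) ∨
      inSub l a b ∨
      (l.size + 1 < a ∧ l.size + 1 < b ∧ inSub r (a - (l.size + 1)) (b - (l.size + 1)))

/-- The binary search tree poset of `T`: `bstRel T a b` iff `a ≺_T b`, i.e. `a ≠ b` and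
the node labelled `a` is in the subtree rooted at the node labelled `b`. -/
def bstRel (T : BinTree) (a b : ℕ) : Prop := a ≠ b ∧ inSub T a b

/-- The increasing forest `inc(T)`: `a ≺ b` iff `a < b` and `a ≺_T b`. -/
def incRel (T : BinTree) (a b : ℕ) : Prop := a < b ∧ bstRel T a b

/-- The decreasing forest `dec(T)`: `b ≺ a` iff `b > a` and `b ≺_T a`. -/
def decRel (T : BinTree) (a b : ℕ) : Prop := b < a ∧ bstRel T a b

/-- The relations of the interval-poset `IP[T,T']`: exactly those of `dec(T)`
together with those of `inc(T')`. -/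
def IPrel (T T' : BinTree) (a b : ℕ) : Prop := decRel T a b ∨ incRel T' a b

end BinTree

open BinTree

/-- `σ` is a linear extension of the strict relation `rel` on `{1,…,n}`: reading the word
`σ(1)…σ(n)` (the `i`-th letter being the label `(σ i : ℕ) + 1`), whenever `rel a b` holds
the letter `a` appears before the letter `b`. -/
def IsLinExt (n : ℕ) (rel : ℕ → ℕ → Prop) (σ : Equiv.Perm (Fin n)) : Prop :=
  ∀ i j : Fin n, rel ((σ i : ℕ) + 1) ((σ j : ℕ) + 1) → i < j

/-- An interval-poset of size `n`: a (strict) poset on `{1,…,n}` such that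
`a ≺ c` implies `b ≺ c` for all `a < b < c`, and `c ≺ a` implies `b ≺ a` for all
`a < b < c`. -/
def IsIntervalPoset (n : ℕ) (rel : ℕ → ℕ → Prop) : Prop :=
  (∀ a b, rel a b → 1 ≤ a ∧ a ≤ n ∧ 1 ≤ b ∧ b ≤ n) ∧
  (∀ a, ¬ rel a a) ∧
  (∀ a b c, rel a b → rel b c → rel a c) ∧
  (∀ a b c, a < b → b < c → rel a c → rel b c) ∧
  (∀ a b c, a < b → b < c → rel c a → rel b a)

/-- `trees(P)` : the number of connected components of the forest formed by the decreasing
relations of `P`, i.e. the number of `k ∈ {1,…,n}` such that there is no `j < k`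
with `k ≺_P j`. -/
noncomputable def treeStat (n : ℕ) (rel : ℕ → ℕ → Prop) : ℕ :=
  Set.ncard {k : ℕ | 1 ≤ k ∧ k ≤ n ∧ ∀ j, j < k → ¬ rel k j}

/-- The composition `𝔹(I1,I2)` of two interval-posets of sizes `k1` and `k2`:
the set of interval-posets `I` of size `k1+k2+1` such that
(i) the relations of `I` among `1,…,k1` are exactly those of `I1`,
(ii) the relations of `I` among `k1+2,…,k1+k2+1` are exactly those of `I2` shifted
by `k1+1`, (iii) `i ≺_I k1+1` for all `i ≤ k1`, and (iv) there is no relation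
`k1+1 ≺_I j` for `j > k1+1`. -/
def Comp (k1 k2 : ℕ) (I1 I2 : ℕ → ℕ → Prop) : Set (ℕ → ℕ → Prop) :=
  {I | IsIntervalPoset (k1 + k2 + 1) I ∧
    (∀ a b, 1 ≤ a → a ≤ k1 → 1 ≤ b → b ≤ k1 → (I a b ↔ I1 a b)) ∧
    (∀ a b, k1 + 2 ≤ a → a ≤ k1 + k2 + 1 → k1 + 2 ≤ b → b ≤ k1 + k2 + 1 →
      (I a b ↔ I2 (a - (k1 + 1)) (b - (k1 + 1)))) ∧
    (∀ i, 1 ≤ i → i ≤ k1 → I i (k1 + 1)) ∧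
    (∀ j, k1 + 1 < j → ¬ I (k1 + 1) j)}

/-- The co-inversions of a permutation `σ` of `{1,…,n}` (written as the word
`σ(1)…σ(n)`): pairs `(σ(i), σ(j))` with `i < j` and `σ(i) > σ(j)`. -/
def coinv (n : ℕ) (σ : Equiv.Perm (Fin n)) : Set (Fin n × Fin n) :=
  {p | ∃ i j : Fin n, i < j ∧ σ j < σ i ∧ p = (σ i, σ j)}

namespace BinTree

lemma size_node (l r : BinTree) : (node l r).size = l.size + r.size + 1 := rfl

lemma size_eq_zero {T : BinTree} (h : T.size = 0) : T = leaf := by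
  cases T with
  | leaf => rfl
  | node l r => simp [size] at h

lemma finite_setOf_size (n : ℕ) : {T : BinTree | T.size = n}.Finite := by
  induction n using Nat.strong_induction_on with
  | _ n ih =>
    cases n with
    | zero =>
      have : {T : BinTree | T.size = 0} ⊆ {leaf} := fun T hT => size_eq_zero hT
      exact Set.Finite.subset (Set.finite_singleton _) this
    | succ m =>
      have : {T : BinTree | T.size = m + 1} ⊆
          ⋃ k ∈ Finset.range (m + 1),
            (fun p : BinTree × BinTree => node p.1 p.2) ''
              ({T | T.size = k} ×ˢ {T | T.size = m - k}) := by
        intro T hT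
        cases T with
        | leaf => simp [size] at hT
        | node l r =>
          simp only [Set.mem_setOf_eq, size] at hT
          have hl : l.size ≤ m := by omega
          refine Set.mem_biUnion (Finset.mem_range.2 (Nat.lt_succ_of_le hl)) ?_
          exact ⟨(l, r), ⟨rfl, by simp only [Set.mem_setOf_eq]; omega⟩, rfl⟩
      refine Set.Finite.subset ?_ this
      refine Set.Finite.biUnion (Finset.range (m+1)).finite_toSet fun k hk => ?_
      simp only [Finset.coe_range, Set.mem_Iio] at hk
      refine Set.Finite.image _ (Set.Finite.prod (ih k ?_) (ih (m - k) ?_)) <;> omega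

lemma Rot.size_eq {T T' : BinTree} (h : Rot T T') : T.size = T'.size := by
  induction h with
  | root A B C => simp [size]; omega
  | left R h ih => simp [size, ih]
  | right L h ih => simp [size, ih]

lemma TamariLE.size_eq {T T' : BinTree} (h : TamariLE T T') : T.size = T'.size := by
  induction h with
  | refl => rfl
  | tail _ h ih => exact ih.trans h.size_eq

lemma TamariLE.refl (T : BinTree) : TamariLE T T := Relation.ReflTransGen.refl

lemma TamariLE.node_left {l l' : BinTree} (r : BinTree) (h : TamariLE l l') :
    TamariLE (node l r) (node l' r) := by
  induction h with
  | refl => exact Relation.ReflTransGen.refl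
  | tail _ h ih => exact ih.tail (Rot.left r h)

lemma TamariLE.node_right (l : BinTree) {r r' : BinTree} (h : TamariLE r r') :
    TamariLE (node l r) (node l r') := by
  induction h with
  | refl => exact Relation.ReflTransGen.refl
  | tail _ h ih => exact ih.tail (Rot.right l h)

lemma rightBorder_le_size (T : BinTree) : T.rightBorder ≤ T.size := by
  induction T with
  | leaf => exact le_refl 0
  | node l r ihl ihr => simp [rightBorder, size]; omega

/-- Graft: put the top `j` right-border nodes of `l` above `node (rest of l) r`. -/
def graft : ℕ → BinTree → BinTree → BinTree
  | 0, l, r => node l r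
  | _+1, leaf, r => node leaf r
  | j+1, node a b, r => node a (graft j b r)

lemma size_graft (j : ℕ) (l r : BinTree) : (graft j l r).size = l.size + r.size + 1 := by
  induction j generalizing l with
  | zero => rfl
  | succ j ih =>
    cases l with
    | leaf => rfl
    | node a b => simp [graft, size, ih]; omega

lemma rightBorder_graft (j : ℕ) (l r : BinTree) (h : j ≤ l.rightBorder) :
    (graft j l r).rightBorder = j + r.rightBorder + 1 := by
  induction j generalizing l with
  | zero => simp [graft, rightBorder]
  | succ j ih =>
    cases l with
    | leaf => simp [rightBorder] at h
    | node a b =>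
      simp only [rightBorder] at h
      rw [graft, rightBorder, ih b (by omega)]
      omega

lemma rot_graft_succ (j : ℕ) (l r : BinTree) (h : j < l.rightBorder) :
    Rot (graft j l r) (graft (j+1) l r) := by
  induction j generalizing l with
  | zero =>
    cases l with
    | leaf => simp [rightBorder] at h
    | node a b => exact Rot.root a b r
  | succ j ih =>
    cases l with
    | leaf => simp [rightBorder] at h
    | node a b =>
      simp only [rightBorder] at h
      exact Rot.right a (ih b (by omega))

lemma tamariLE_graft (j : ℕ) (l r : BinTree) (h : j ≤ l.rightBorder) :
    TamariLE (node l r) (graft j l r) := by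
  induction j with
  | zero => exact TamariLE.refl _
  | succ j ih => exact (ih (by omega)).tail (rot_graft_succ j l r (by omega))

end BinTree
namespace BinTree

lemma rot_graft {j : ℕ} {l r T'' : BinTree} (hj : j ≤ l.rightBorder)
    (h : Rot (graft j l r) T'') :
    ∃ j' l' r', j' ≤ l'.rightBorder ∧ T'' = graft j' l' r' ∧
      TamariLE l l' ∧ TamariLE r r' := by
  induction j generalizing l T'' with
  | zero =>
    rw [graft] at h
    cases h with
    | root A B _ =>
      have e : node A (node B r) = graft 1 (node A B) r := rfl
      exact ⟨1, node A B, r, by simp [rightBorder], e, TamariLE.refl _, TamariLE.refl _⟩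
    | left _ h =>
      exact ⟨0, _, _, Nat.zero_le _, rfl, Relation.ReflTransGen.single h, TamariLE.refl _⟩
    | right _ h =>
      exact ⟨0, _, _, Nat.zero_le _, rfl, TamariLE.refl _, Relation.ReflTransGen.single h⟩
  | succ j ih =>
    cases l with
    | leaf => simp [rightBorder] at hj
    | node a b =>
      simp only [rightBorder] at hj
      rw [graft] at h
      cases h with
      | root A B C =>
        refine ⟨j + 2, node A (node B b), r, ?_, ?_,
          Relation.ReflTransGen.single (Rot.root A B b), TamariLE.refl _⟩
        · simp [rightBorder]; omega
        · show node A (node B (graft j b r)) = graft (j+2) (node A (node B b)) r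
          rfl
      | left _ h =>
        rename_i a'
        refine ⟨j + 1, node a' b, r, ?_, ?_,
          Relation.ReflTransGen.single (Rot.left b h), TamariLE.refl _⟩
        · simp [rightBorder]; omega
        · rfl
      | right _ h =>
        obtain ⟨j', b', r', hj', hT, hb, hr⟩ := ih (by omega) h
        exact ⟨j' + 1, node a b', r', by simp [rightBorder]; omega, by rw [hT]; rfl,
          TamariLE.node_right a hb, hr⟩

/-- The decomposition of the upper Tamari ideal of `node l r`. -/
lemma tamariLE_node_iff {l r T' : BinTree} :
    TamariLE (node l r) T' ↔
      ∃ j l' r', j ≤ l'.rightBorder ∧ T' = graft j l' r' ∧ TamariLE l l' ∧ TamariLE r r' := by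
  constructor
  · intro h
    induction h with
    | refl => exact ⟨0, l, r, Nat.zero_le _, rfl, TamariLE.refl _, TamariLE.refl _⟩
    | tail _ hrot ih =>
      obtain ⟨j, l', r', hj, rfl, hl, hr⟩ := ih
      obtain ⟨j', l'', r'', hj', hT, hl', hr'⟩ := rot_graft hj hrot
      exact ⟨j', l'', r'', hj', hT, hl.trans hl', hr.trans hr'⟩
  · rintro ⟨j, l', r', hj, rfl, hl, hr⟩
    exact (((TamariLE.node_left r hl).trans (TamariLE.node_right l' hr)).trans
      (tamariLE_graft j l' r' hj))

lemma graft_inj {j1 j2 : ℕ} {l1 l2 r1 r2 : BinTree}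
    (h1 : j1 ≤ l1.rightBorder) (h2 : j2 ≤ l2.rightBorder)
    (hs : l1.size = l2.size) (h : graft j1 l1 r1 = graft j2 l2 r2) :
    j1 = j2 ∧ l1 = l2 ∧ r1 = r2 := by
  induction j1 generalizing j2 l1 l2 with
  | zero =>
    cases j2 with
    | zero => rw [graft, graft] at h; injection h with e1 e2; exact ⟨rfl, e1, e2⟩
    | succ m =>
      cases l2 with
      | leaf => simp [rightBorder] at h2
      | node a b =>
        rw [graft, graft] at h
        injection h with e1 e2
        subst e1
        simp [size] at hs
        omega
  | succ j ih =>
    cases l1 with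
    | leaf => simp [rightBorder] at h1
    | node a b =>
      cases j2 with
      | zero =>
        rw [graft, graft] at h
        injection h with e1 e2
        subst e1
        simp [size] at hs
        omega
      | succ m =>
        cases l2 with
        | leaf => simp [rightBorder] at h2
        | node a2 b2 =>
          rw [graft, graft] at h
          injection h with e1 e2
          subst e1
          simp only [rightBorder] at h1 h2
          simp only [size] at hs
          obtain ⟨e3, e4, e5⟩ := ih (by omega) (j2 := m) (l2 := b2) (by omega) (by omega) e2
          subst e4 e5
          exact ⟨by omega, rfl, rfl⟩

end BinTree
section Helpers

variable {α β : Type*}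

lemma ncard_fiberwise {s : Set α} (hs : s.Finite) (g : α → β) (I : Finset β)
    (h : ∀ x ∈ s, g x ∈ I) : s.ncard = ∑ i ∈ I, {x ∈ s | g x = i}.ncard := by
  classical
  rw [Set.ncard_eq_toFinset_card _ hs]
  rw [Finset.card_eq_sum_card_fiberwise (f := g) (t := I)
    (fun x hx => h x (hs.mem_toFinset.1 hx))]
  refine Finset.sum_congr rfl fun i _ => ?_
  rw [Set.ncard_eq_toFinset_card _ (hs.subset (Set.sep_subset _ _))]
  congr 1
  ext x
  simp [Set.Finite.mem_toFinset]

lemma ncard_prod (s : Set α) (t : Set β) : (s ×ˢ t).ncard = s.ncard * t.ncard := by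
  rw [← Nat.card_coe_set_eq, ← Nat.card_coe_set_eq, ← Nat.card_coe_set_eq,
    Nat.card_congr (Equiv.Set.prod s t), Nat.card_prod]

end Helpers

namespace BinTree

/-- The counting function: number of trees above `t` with right border `k`. -/
noncomputable def cnt (t : BinTree) (k : ℕ) : ℕ :=
  {t' : BinTree | TamariLE t t' ∧ t'.rightBorder = k}.ncard

lemma finite_above (t : BinTree) : {t' : BinTree | TamariLE t t'}.Finite :=
  (finite_setOf_size t.size).subset fun _ h => h.size_eq.symm

lemma cnt_eq_zero_of_size_lt {t : BinTree} {k : ℕ} (h : t.size < k) : cnt t k = 0 := by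
  rw [cnt, Set.ncard_eq_zero ((finite_above t).subset fun _ h => h.1)]
  ext t'
  simp only [Set.mem_setOf_eq, Set.mem_empty_iff_false, iff_false, not_and]
  intro hle hrb
  have := rightBorder_le_size t'
  have := hle.size_eq
  omega

lemma cnt_leaf (k : ℕ) : cnt leaf k = if k = 0 then 1 else 0 := by
  have hset : {t' : BinTree | TamariLE leaf t' ∧ t'.rightBorder = k} =
      if k = 0 then {leaf} else ∅ := by
    ext t'
    have : TamariLE leaf t' ↔ t' = leaf := by
      constructor
      · intro h
        exact (size_eq_zero h.size_eq.symm)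
      · rintro rfl; exact TamariLE.refl _
    split <;> rename_i hk
    · subst hk
      simp only [Set.mem_setOf_eq, Set.mem_singleton_iff, this]
      constructor
      · rintro ⟨rfl, -⟩; rfl
      · rintro rfl; exact ⟨rfl, rfl⟩
    · simp only [Set.mem_setOf_eq, Set.mem_empty_iff_false, iff_false, not_and, this]
      rintro rfl
      simp only [rightBorder]
      omega
  rw [cnt, hset]
  split <;> simp

/-- Counting above a tree with right border at least `j`, as a sum. -/
lemma ncard_above_rb_ge (l : BinTree) (j : ℕ) :
    {l' : BinTree | TamariLE l l' ∧ j ≤ l'.rightBorder}.ncard =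
      ∑ k1 ∈ Finset.Icc j l.size, cnt l k1 := by
  rw [ncard_fiberwise ((finite_above l).subset fun _ h => h.1) rightBorder
    (Finset.Icc j l.size) (fun t' ht' => by
      have := rightBorder_le_size t'
      have := ht'.1.size_eq
      simp only [Finset.mem_Icc]
      exact ⟨ht'.2, by omega⟩)]
  refine Finset.sum_congr rfl fun k1 hk1 => ?_
  rw [Finset.mem_Icc] at hk1
  rw [cnt]
  congr 1
  ext t'
  simp only [Set.mem_setOf_eq]
  constructor
  · rintro ⟨⟨h1, -⟩, h3⟩; exact ⟨h1, h3⟩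
  · rintro ⟨h1, rfl⟩; exact ⟨⟨h1, hk1.1⟩, rfl⟩

lemma cnt_node_zero (l r : BinTree) : cnt (node l r) 0 = 0 := by
  rw [cnt, Set.ncard_eq_zero ((finite_above _).subset fun _ h => h.1)]
  ext t'
  simp only [Set.mem_setOf_eq, Set.mem_empty_iff_false, iff_false, not_and]
  intro hle hrb
  have hsz := hle.size_eq
  have : t' = leaf := by
    cases t' with
    | leaf => rfl
    | node a b => simp [rightBorder] at hrb
  subst this
  simp [size] at hsz

/-- The main counting recursion. -/
lemma cnt_node (l r : BinTree) (m : ℕ) :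
    cnt (node l r) (m + 1) =
      ∑ p ∈ Finset.HasAntidiagonal.antidiagonal m, (∑ k1 ∈ Finset.Icc p.1 l.size, cnt l k1) * cnt r p.2 := by
  classical
  set D : Set (ℕ × BinTree × BinTree) :=
    {p | p.1 ≤ p.2.1.rightBorder ∧ TamariLE l p.2.1 ∧ TamariLE r p.2.2 ∧
      p.1 + p.2.2.rightBorder + 1 = m + 1} with hD
  have hDfin : D.Finite := by
    have : D ⊆ (Set.Iic l.size) ×ˢ ({t | t.size = l.size} ×ˢ {t | t.size = r.size}) := by
      rintro ⟨j, l', r'⟩ ⟨h1, h2, h3, h4⟩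
      dsimp only at h1 h2 h3 h4
      refine ⟨?_, h2.size_eq.symm, h3.size_eq.symm⟩
      have := rightBorder_le_size l'
      have := h2.size_eq
      simp only [Set.mem_Iic]
      omega
    exact Set.Finite.subset ((Set.finite_Iic _).prod
      ((finite_setOf_size _).prod (finite_setOf_size _))) this
  have himg : {t' : BinTree | TamariLE (node l r) t' ∧ t'.rightBorder = m + 1} =
      (fun p : ℕ × BinTree × BinTree => graft p.1 p.2.1 p.2.2) '' D := by
    ext t'
    simp only [Set.mem_setOf_eq, Set.mem_image]
    constructor
    · rintro ⟨hle, hrb⟩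
      obtain ⟨j, l', r', hj, rfl, hl, hr⟩ := tamariLE_node_iff.1 hle
      rw [rightBorder_graft j l' r' hj] at hrb
      exact ⟨(j, l', r'), ⟨hj, hl, hr, hrb⟩, rfl⟩
    · rintro ⟨⟨j, l', r'⟩, ⟨h1, h2, h3, h4⟩, rfl⟩
      exact ⟨tamariLE_node_iff.2 ⟨j, l', r', h1, rfl, h2, h3⟩,
        by rw [rightBorder_graft j l' r' h1]; exact h4⟩
  have hinj : Set.InjOn (fun p : ℕ × BinTree × BinTree => graft p.1 p.2.1 p.2.2) D := by
    rintro ⟨j1, l1, r1⟩ ⟨e1, e2, e3, e4⟩ ⟨j2, l2, r2⟩ ⟨f1, f2, f3, f4⟩ h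
    dsimp only at e1 e2 e3 e4 f1 f2 f3 f4 h
    obtain ⟨g1, g2, g3⟩ := graft_inj e1 f1 (e2.size_eq.symm.trans f2.size_eq) h
    simp only [Prod.mk.injEq]
    exact ⟨g1, g2, g3⟩
  rw [cnt, himg, Set.ncard_image_of_injOn hinj]
  rw [ncard_fiberwise hDfin (fun p => (p.1, p.2.2.rightBorder)) (Finset.HasAntidiagonal.antidiagonal m)
    (fun p hp => by
      obtain ⟨h1, h2, h3, h4⟩ := hp
      simp only [Finset.HasAntidiagonal.mem_antidiagonal]
      omega)]
  refine Finset.sum_congr rfl fun ⟨j, k2⟩ hjk => ?_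
  rw [Finset.HasAntidiagonal.mem_antidiagonal] at hjk
  have : {x ∈ D | (fun p : ℕ × BinTree × BinTree => (p.1, p.2.2.rightBorder)) x = (j, k2)} =
      ({j} : Set ℕ) ×ˢ ({l' | TamariLE l l' ∧ j ≤ l'.rightBorder} ×ˢ
        {r' | TamariLE r r' ∧ r'.rightBorder = k2}) := by
    ext ⟨j', l', r'⟩
    simp only [Set.mem_sep_iff, Set.mem_prod, Set.mem_singleton_iff, Set.mem_setOf_eq,
      Prod.mk.injEq, hD]
    constructor
    · rintro ⟨⟨h1, h2, h3, h4⟩, rfl, rfl⟩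
      exact ⟨rfl, ⟨h2, h1⟩, h3, rfl⟩
    · rintro ⟨rfl, ⟨h2, h1⟩, h3, rfl⟩
      exact ⟨⟨h1, h2, h3, by omega⟩, rfl, rfl⟩
  rw [this, ncard_prod, ncard_prod, Set.ncard_singleton, one_mul, ncard_above_rb_ge]
  rfl

end BinTree
namespace BinTree

lemma coeff_tamPolyMirror (t : BinTree) (k : ℕ) :
    (tamPolyMirror t).coeff k = (cnt t k : ℤ) := by
  induction t generalizing k with
  | leaf =>
    rw [tamPolyMirror, cnt_leaf]
    rcases Nat.eq_zero_or_pos k with rfl | hk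
    · simp
    · rw [Polynomial.coeff_one]
      simp only [Nat.pos_iff_ne_zero.1 hk, if_neg (Nat.pos_iff_ne_zero.1 hk)]
      simp [Nat.pos_iff_ne_zero.1 hk]
  | node l r ihl ihr =>
    set Bl := tamPolyMirror l with hBldef
    set Br := tamPolyMirror r with hBrdef
    have hdeg : Bl.natDegree ≤ l.size := by
      rw [Polynomial.natDegree_le_iff_coeff_eq_zero]
      intro N hN
      rw [ihl N, cnt_eq_zero_of_size_lt hN, Nat.cast_zero]
    obtain ⟨a, ha⟩ : ∃ a : ℕ → ℤ, ∀ k, Bl.coeff k = a k :=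
      ⟨fun k => Bl.coeff k, fun _ => rfl⟩
    set P : Polynomial ℤ :=
      ∑ k1 ∈ Finset.range (l.size + 1), C (a k1) * ∑ i ∈ Finset.range (k1 + 1), X ^ i
      with hPdef
    have key1 : (X - C 1) * P = X * Bl - C (Bl.eval 1) := by
      have hS : (X - C 1) * P =
          ∑ k1 ∈ Finset.range (l.size + 1), C (a k1) * (X ^ (k1 + 1) - 1) := by
        rw [hPdef, Polynomial.C_1, Finset.mul_sum]
        refine Finset.sum_congr rfl fun k1 _ => ?_
        have hg := geom_sum_mul (X : Polynomial ℤ) (k1 + 1)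
        linear_combination C (a k1) * hg
      have hBl : Bl = ∑ k1 ∈ Finset.range (l.size + 1), C (a k1) * X ^ k1 := by
        conv_lhs => rw [Bl.as_sum_range' (l.size + 1) (Nat.lt_succ_of_le hdeg)]
        simp_rw [← Polynomial.C_mul_X_pow_eq_monomial, ha]
      have heval : Bl.eval 1 = ∑ k1 ∈ Finset.range (l.size + 1), a k1 := by
        rw [Polynomial.eval_eq_sum_range' (Nat.lt_succ_of_le hdeg)]
        simp [ha]
      rw [hS, heval, map_sum]
      conv_rhs => rw [hBl]
      rw [Finset.mul_sum, ← Finset.sum_sub_distrib]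
      refine Finset.sum_congr rfl fun k1 _ => ?_
      ring
    have key2 : tamPolyMirror (node l r) = X * (P * Br) := by
      rw [tamPolyMirror]
      have : X * Br * (X * Bl - C (Bl.eval 1)) = (X - C 1) * (X * (P * Br)) := by
        rw [← key1]; ring
      rw [← hBldef, ← hBrdef, this,
        Polynomial.mul_divByMonic_cancel_left _ (Polynomial.monic_X_sub_C 1)]
    have hPcoeff : ∀ j, P.coeff j = ∑ k1 ∈ Finset.Icc j l.size, a k1 := by
      intro j
      rw [hPdef, Polynomial.finset_sum_coeff]
      have step : ∀ k1 ∈ Finset.range (l.size + 1),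
          (C (a k1) * ∑ i ∈ Finset.range (k1 + 1), X ^ i).coeff j =
            if j ≤ k1 then a k1 else 0 := by
        intro k1 _
        rw [Polynomial.coeff_C_mul, Polynomial.finset_sum_coeff]
        simp_rw [Polynomial.coeff_X_pow]
        rw [Finset.sum_ite_eq (Finset.range (k1 + 1)) j (fun _ => (1 : ℤ))]
        simp [Nat.lt_succ_iff]
      rw [Finset.sum_congr rfl step, ← Finset.sum_filter]
      congr 1
      ext k1
      simp only [Finset.mem_filter, Finset.mem_range, Finset.mem_Icc, Nat.lt_succ_iff]
      omega
    rw [key2]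
    rcases k with _ | m
    · rw [Polynomial.mul_coeff_zero, Polynomial.coeff_X_zero, zero_mul, cnt_node_zero,
        Nat.cast_zero]
    · rw [Polynomial.coeff_X_mul, Polynomial.coeff_mul, cnt_node l r m]
      push_cast
      refine Finset.sum_congr rfl fun p _ => ?_
      rw [hPcoeff p.1, ihr p.2]
      congr 1
      refine Finset.sum_congr rfl fun k1 _ => ?_
      rw [← ha k1, ihl k1]

end BinTree
/-- For a binary tree `T` of size `n`, the coefficient of `x^k` in the mirror
Tamari polynomial `B̃_T` equals the number of binary trees `T'` of size `n` with `T ≤ T'`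
in the Tamari order whose right border has exactly `k` nodes; in particular `B̃_T(1)` is
the number of trees greater than or equal to `T`. -/
theorem tamPolyMirror_counts (T : BinTree) :
    (∀ k : ℕ, (tamPolyMirror T).coeff k =
      (Nat.card {T' : BinTree // T'.size = T.size ∧ TamariLE T T' ∧ T'.rightBorder = k} : ℤ)) ∧
    (tamPolyMirror T).eval 1 =
      (Nat.card {T' : BinTree // T'.size = T.size ∧ TamariLE T T'} : ℤ) := by
  have hcard : ∀ k, (Nat.card
      {T' : BinTree // T'.size = T.size ∧ TamariLE T T' ∧ T'.rightBorder = k}) = cnt T k := by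
    intro k
    rw [cnt, ← Nat.card_coe_set_eq]
    exact Nat.card_congr (Equiv.subtypeEquivRight fun T' => by
      constructor
      · rintro ⟨-, h2, h3⟩; exact ⟨h2, h3⟩
      · rintro ⟨h2, h3⟩; exact ⟨h2.size_eq.symm, h2, h3⟩)
  constructor
  · intro k
    rw [coeff_tamPolyMirror, hcard]
  · have hdeg : (tamPolyMirror T).natDegree ≤ T.size := by
      rw [Polynomial.natDegree_le_iff_coeff_eq_zero]
      intro N hN
      rw [coeff_tamPolyMirror, cnt_eq_zero_of_size_lt hN, Nat.cast_zero]
    rw [Polynomial.eval_eq_sum_range' (Nat.lt_succ_of_le hdeg)]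
    simp only [one_pow, mul_one, coeff_tamPolyMirror]
    have hN : Nat.card {T' : BinTree // T'.size = T.size ∧ TamariLE T T'} =
        {t' | TamariLE T t'}.ncard := by
      rw [← Nat.card_coe_set_eq]
      exact Nat.card_congr (Equiv.subtypeEquivRight fun T' =>
        ⟨fun h => h.2, fun h => ⟨h.size_eq.symm, h⟩⟩)
    rw [hN, ncard_fiberwise (finite_above T) rightBorder (Finset.range (T.size + 1))
      (fun t' ht' => Finset.mem_range.2
        (by have := rightBorder_le_size t'; have := ht'.size_eq; omega))]
    push_cast
    refine Finset.sum_congr rfl fun k _ => ?_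
    congr 1
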